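/- Let A be a finite group acting transitively on a finite set X, let G be a normal subgroup of A acting transitively on X, and fix x₀ ∈ X. Let a ∈ A be an element stabilizing x₀ such that A is generated by G together with a. Set H = Stab_A(x₀) and K = Stab_G(x₀) = G ∩ H, and let d be the number of H-orbits on X that are also K-orbits. Then the number of elements of the coset aG having no fixed point on X is at least (d-1)·|K|; in particular the proportion of derangements in the coset aG is at least (d-1)/|X|. -/

import Mathlib

open Finset MulAction

open Finset MulAction

open scoped Classical in
private lemma coset_card_eq' {A : Type*} [Group A] [Fintype A]
    (K : Subgroup A) (a c : A) (hc : a⁻¹ * c ∈ K)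
    (Q : A → Prop)
    (hQ1 : ∀ b, Q b → Q (c⁻¹ * b)) (hQ2 : ∀ b, Q b → Q (c * b)) :
    (Finset.univ.filter fun b => a⁻¹ * b ∈ K ∧ Q b).card
      = (Finset.univ.filter fun b => b ∈ K ∧ Q b).card := by
  apply Finset.card_bij' (fun b _ => c⁻¹ * b) (fun b _ => c * b)
  · intro b hb
    simp only [Finset.mem_filter, Finset.mem_univ, true_and] at hb ⊢
    refine ⟨?_, hQ1 b hb.2⟩
    have h : c⁻¹ * b = (a⁻¹ * c)⁻¹ * (a⁻¹ * b) := by group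
    rw [h]; exact mul_mem (inv_mem hc) hb.1
  · intro b hb
    simp only [Finset.mem_filter, Finset.mem_univ, true_and] at hb ⊢
    refine ⟨?_, hQ2 b hb.2⟩
    have h : a⁻¹ * (c * b) = (a⁻¹ * c) * b := by group
    rw [h]; exact mul_mem hc hb.1
  · intro b _; group
  · intro b _; group

open scoped Classical in
private lemma fiber_card_eq' {A : Type*} [Group A] [Fintype A]
    (K : Subgroup A) (k : A) (hk : k ∈ K) (Q R : A → Prop)
    (h1 : ∀ b, Q b → R (k⁻¹ * b)) (h2 : ∀ b, R b → Q (k * b)) :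
    (Finset.univ.filter fun b => b ∈ K ∧ Q b).card
      = (Finset.univ.filter fun b => b ∈ K ∧ R b).card := by
  apply Finset.card_bij' (fun b _ => k⁻¹ * b) (fun b _ => k * b)
  · intro b hb
    simp only [Finset.mem_filter, Finset.mem_univ, true_and] at hb ⊢
    exact ⟨mul_mem (inv_mem hk) hb.1, h1 b hb.2⟩
  · intro b hb
    simp only [Finset.mem_filter, Finset.mem_univ, true_and] at hb ⊢
    exact ⟨mul_mem hk hb.1, h2 b hb.2⟩
  · intro b _; group
  · intro b _; group

open scoped Classical in
private lemma conj_card_eq' {A : Type*} [Group A] [Fintype A]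
    (G : Subgroup A) [hN : G.Normal] (g : A) (Q R : A → Prop)
    (h1 : ∀ b, Q b → R (g⁻¹ * b * g)) (h2 : ∀ b, R b → Q (g * b * g⁻¹)) :
    (Finset.univ.filter fun b => b ∈ G ∧ Q b).card
      = (Finset.univ.filter fun b => b ∈ G ∧ R b).card := by
  apply Finset.card_bij' (fun b _ => g⁻¹ * b * g) (fun b _ => g * b * g⁻¹)
  · intro b hb
    simp only [Finset.mem_filter, Finset.mem_univ, true_and] at hb ⊢
    exact ⟨by simpa using hN.conj_mem b hb.1 g⁻¹, h1 b hb.2⟩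
  · intro b hb
    simp only [Finset.mem_filter, Finset.mem_univ, true_and] at hb ⊢
    exact ⟨hN.conj_mem b hb.1 g, h2 b hb.2⟩
  · intro b _; group
  · intro b _; group

private lemma comm_mem' {A : Type*} [Group A] (G : Subgroup A) [G.Normal] (a : A)
    (hgen : Subgroup.closure (insert a (G : Set A)) = ⊤) (c : A) :
    a⁻¹ * (c * a * c⁻¹) ∈ G := by
  have hz : ∀ q : A ⧸ G, q ∈ Subgroup.zpowers ((QuotientGroup.mk' G) a) := by
    have h1 : Subgroup.map (QuotientGroup.mk' G) (Subgroup.closure (insert a (G : Set A))) = ⊤ := by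
      rw [hgen, ← MonoidHom.range_eq_map]
      exact MonoidHom.range_eq_top_of_surjective _ (QuotientGroup.mk'_surjective G)
    rw [MonoidHom.map_closure] at h1
    have h2 : Subgroup.closure ((QuotientGroup.mk' G) '' insert a (G : Set A))
        ≤ Subgroup.zpowers ((QuotientGroup.mk' G) a) := by
      rw [Subgroup.closure_le]
      rintro q hq
      simp only [Set.image_insert_eq, Set.mem_insert_iff] at hq
      rcases hq with rfl | hq
      · exact Subgroup.mem_zpowers _
      · obtain ⟨g, hg, rfl⟩ := hq
        have hg1 : (QuotientGroup.mk' G) g = 1 := (QuotientGroup.eq_one_iff g).mpr hg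
        rw [hg1]; exact one_mem _
    intro q
    exact h2 (h1 ▸ Subgroup.mem_top q)
  obtain ⟨n, hn⟩ := hz ((QuotientGroup.mk' G) c)
  have key : ((QuotientGroup.mk' G) (c * a * c⁻¹)) = (QuotientGroup.mk' G) a := by
    rw [map_mul, map_mul, map_inv, ← hn]
    group
  exact (QuotientGroup.eq (s := G) (a := a) (b := c * a * c⁻¹)).mp key.symm

/-- Let `A` act transitively on a finite set `X`, let `G ⊴ A` also act transitively,
fix `x₀ ∈ X`, and let `a ∈ A` stabilize `x₀` with `A` generated by `G` together with
`a`.  Set `H = Stab_A(x₀)`, `K = G ∩ H`, and let `d` be the number of `H`-orbits on `X`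
that are also `K`-orbits.  Then the number of derangements in the coset `aG` is at
least `(d-1)|K|`; in particular the proportion of derangements in the coset `aG` is at
least `(d-1)/|X|`. -/
theorem coset_derangements_ge_of_common_orbits
    (A : Type*) [Group A] [Fintype A] (X : Type*) [Fintype X] [MulAction A X]
    [MulAction.IsPretransitive A X]
    (G : Subgroup A) [G.Normal]
    (hGtrans : ∀ x y : X, ∃ g ∈ G, g • x = y)
    (x₀ : X) (a : A) (ha : a • x₀ = x₀)
    (hgen : Subgroup.closure (insert a (G : Set A)) = ⊤) :
    ((Set.ncard {O : Set X |
          (∃ x : X, O = MulAction.orbit (MulAction.stabilizer A x₀) x) ∧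
          ∀ x ∈ O, O = MulAction.orbit (G ⊓ MulAction.stabilizer A x₀ : Subgroup A) x}
        : ℝ) - 1) * Nat.card (G ⊓ MulAction.stabilizer A x₀ : Subgroup A) ≤
      (Set.ncard {b : A | a⁻¹ * b ∈ G ∧ ∀ x : X, b • x ≠ x} : ℝ) ∧
    ((Set.ncard {O : Set X |
          (∃ x : X, O = MulAction.orbit (MulAction.stabilizer A x₀) x) ∧
          ∀ x ∈ O, O = MulAction.orbit (G ⊓ MulAction.stabilizer A x₀ : Subgroup A) x}
        : ℝ) - 1) / Fintype.card X ≤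
      (Set.ncard {b : A | a⁻¹ * b ∈ G ∧ ∀ x : X, b • x ≠ x} : ℝ) / Nat.card G := by
  classical
  have hcomm : ∀ c : A, a⁻¹ * (c * a * c⁻¹) ∈ G := comm_mem' G a hgen
  set H : Subgroup A := MulAction.stabilizer A x₀ with hHdef
  set K : Subgroup A := G ⊓ H with hKdef
  have hfixinv : ∀ (c : A) (x : X), c • x = x → c⁻¹ • x = x := by
    intro c x h
    conv_lhs => rw [← h]
    rw [inv_smul_smul]
  have haH : a ∈ H := MulAction.mem_stabilizer_iff.mpr ha
  have hmemK : ∀ b : A, b ∈ K ↔ b ∈ G ∧ b • x₀ = x₀ := by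
    intro b
    simp [hKdef, Subgroup.mem_inf, MulAction.mem_stabilizer_iff, hHdef]
  have haa : a⁻¹ * a ∈ G := by rw [inv_mul_cancel]; exact one_mem G
  have haaK : a⁻¹ * a ∈ K := by rw [inv_mul_cancel]; exact one_mem K
  -- finsets
  set Kf : Finset A := Finset.univ.filter (fun b => b ∈ K) with hKfdef
  set Gf : Finset A := Finset.univ.filter (fun b => b ∈ G) with hGfdef
  set Sf : Finset A := Finset.univ.filter (fun b => a⁻¹ * b ∈ G) with hSfdef
  set Tf : Finset A := Finset.univ.filter (fun b => a⁻¹ * b ∈ K) with hTfdef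
  have hKfilter : (Finset.univ.filter fun b : A => b ∈ G ∧ b • x₀ = x₀) = Kf := by
    rw [hKfdef]
    apply Finset.filter_congr
    intro b _
    rw [hmemK b]
  -- |Sf| = |Gf|
  have hSG : Sf.card = Gf.card := by
    have := coset_card_eq' G a a haa (fun _ => True) (fun _ h => h) (fun _ h => h)
    simpa only [and_true] using this
  -- |Tf| = |Kf|
  have hTK : Tf.card = Kf.card := by
    have := coset_card_eq' K a a haaK (fun _ => True) (fun _ h => h) (fun _ h => h)
    simpa only [and_true] using this
  -- |Gf| = |X| * |Kf|
  have hGX : Gf.card = Fintype.card X * Kf.card := by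
    have hfib : Gf.card = ∑ x : X, (Gf.filter fun b => b • x₀ = x).card :=
      Finset.card_eq_sum_card_fiberwise (fun b _ => Finset.mem_univ (b • x₀))
    rw [hfib]
    have hper : ∀ x : X, (Gf.filter fun b => b • x₀ = x).card = Kf.card := by
      intro x
      obtain ⟨g, hgG, hgx⟩ := hGtrans x₀ x
      rw [hGfdef, Finset.filter_filter]
      have := fiber_card_eq' G g hgG (fun b => b • x₀ = x) (fun b => b • x₀ = x₀)
        (fun b hb => by
          have hb' : b • x₀ = x := hb
          show (g⁻¹ * b) • x₀ = x₀
          rw [mul_smul, hb', ← hgx, inv_smul_smul])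
        (fun b hb => by
          have hb' : b • x₀ = x₀ := hb
          show (g * b) • x₀ = x
          rw [mul_smul, hb', hgx])
      rw [this, hKfilter]
    simp only [hper, Finset.sum_const, Finset.card_univ, smul_eq_mul]
  -- per-point coset-stabilizer count for Sf
  have hSstab : ∀ x : X, (Sf.filter fun b => b • x = x).card = Kf.card := by
    intro x
    obtain ⟨g, hgG, hgx⟩ := hGtrans x₀ x
    have hgx' : g⁻¹ • x = x₀ := by rw [← hgx, inv_smul_smul]
    rw [hSfdef, Finset.filter_filter]
    have hc : a⁻¹ * (g * a * g⁻¹) ∈ G := hcomm g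
    have hcx : (g * a * g⁻¹) • x = x := by
      rw [mul_smul, mul_smul, hgx', ha, hgx]
    have h1 := coset_card_eq' G a (g * a * g⁻¹) hc (fun b => b • x = x)
      (fun b hb => by
        have hb' : b • x = x := hb
        show ((g * a * g⁻¹)⁻¹ * b) • x = x
        rw [mul_smul, hb']
        exact hfixinv _ x hcx)
      (fun b hb => by
        have hb' : b • x = x := hb
        show ((g * a * g⁻¹) * b) • x = x
        rw [mul_smul, hb', hcx])
    rw [h1]
    have h2 := conj_card_eq' G g (fun b => b • x = x) (fun b => b • x₀ = x₀)
      (fun b hb => by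
        have hb' : b • x = x := hb
        show (g⁻¹ * b * g) • x₀ = x₀
        rw [mul_smul, mul_smul, hgx, hb', hgx'])
      (fun b hb => by
        have hb' : b • x₀ = x₀ := hb
        show (g * b * g⁻¹) • x = x
        rw [mul_smul, mul_smul, hgx', hb', hgx])
    rw [h2, hKfilter]
  -- double counting identity
  have hdouble : ∀ s : Finset A,
      (∑ b ∈ s, (Finset.univ.filter fun x : X => b • x = x).card)
        = ∑ x : X, (s.filter fun b => b • x = x).card := by
    intro s
    simp only [Finset.card_filter]
    exact Finset.sum_comm
  have hSfix : (∑ b ∈ Sf, (Finset.univ.filter fun x : X => b • x = x).card)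
      = Fintype.card X * Kf.card := by
    rw [hdouble]
    simp only [hSstab, Finset.sum_const, Finset.card_univ, smul_eq_mul]
  have hconjK : ∀ k ∈ K, a⁻¹ * k * a ∈ K := by
    intro k hk
    rw [hmemK] at hk ⊢
    constructor
    · simpa using (‹G.Normal›.conj_mem k hk.1 a⁻¹)
    · rw [mul_smul, mul_smul, ha, hk.2]
      exact hfixinv a x₀ ha
  -- orbit set
  set 𝒪 : Set (Set X) := {O : Set X |
      (∃ x : X, O = MulAction.orbit H x) ∧ ∀ x ∈ O, O = MulAction.orbit K x} with h𝒪def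
  set OF : Finset (Set X) := (Set.toFinite 𝒪).toFinset with hOFdef
  have hOFmem : ∀ O : Set X, O ∈ OF ↔ O ∈ 𝒪 := fun O => Set.Finite.mem_toFinset _
  have horbeq : ∀ O ∈ 𝒪, ∀ x ∈ O, O = MulAction.orbit H x := by
    intro O hO x hx
    obtain ⟨⟨x₁, hx₁⟩, _⟩ := hO
    rw [hx₁] at hx ⊢
    exact (MulAction.orbit_eq_iff.mpr hx).symm
  have haO : ∀ O ∈ 𝒪, ∀ x ∈ O, a • x ∈ O := by
    intro O hO x hx
    rw [horbeq O hO x hx]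
    exact MulAction.mem_orbit x (⟨a, haH⟩ : H)
  have hKO : ∀ O ∈ 𝒪, ∀ x ∈ O, ∀ y ∈ O, ∃ k ∈ K, k • x = y := by
    intro O hO x hx y hy
    obtain ⟨-, h2⟩ := hO
    rw [h2 x hx] at hy
    obtain ⟨⟨k, hk⟩, hky⟩ := hy
    exact ⟨k, hk, hky⟩
  have hKsub : ∀ O ∈ 𝒪, ∀ x ∈ O, ∀ b ∈ K, b • x ∈ O := by
    intro O hO x hx b hb
    obtain ⟨-, h2⟩ := hO
    rw [h2 x hx]
    exact MulAction.mem_orbit x (⟨b, hb⟩ : K)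
  -- per-orbit count
  have hOstep : ∀ O ∈ 𝒪,
      (∑ x ∈ Finset.univ.filter (fun x : X => x ∈ O),
        (Finset.univ.filter fun b => a⁻¹ * b ∈ K ∧ b • x = x).card) = Kf.card := by
    intro O hO
    set Of : Finset X := Finset.univ.filter (fun x : X => x ∈ O) with hOf
    have hOfpos : 0 < Of.card := by
      obtain ⟨⟨x₁, hx₁⟩, -⟩ := hO
      refine Finset.card_pos.mpr ⟨x₁, ?_⟩
      simp only [hOf, Finset.mem_filter, Finset.mem_univ, true_and, hx₁]
      exact MulAction.mem_orbit_self x₁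
    have stepA : ∀ x ∈ Of, (Finset.univ.filter fun b => a⁻¹ * b ∈ K ∧ b • x = x).card
        = (Finset.univ.filter fun b => b ∈ K ∧ b • x = x).card := by
      intro x hxOf
      have hx : x ∈ O := by simpa [hOf] using hxOf
      obtain ⟨k, hkK, hkx⟩ := hKO O hO x hx (a • x) (haO O hO x hx)
      have hc : a⁻¹ * (k⁻¹ * a) ∈ K := by
        have h := hconjK k⁻¹ (inv_mem hkK)
        rwa [mul_assoc] at h
      have hcx : (k⁻¹ * a) • x = x := by rw [mul_smul, ← hkx, inv_smul_smul]
      exact coset_card_eq' K a (k⁻¹ * a) hc (fun b => b • x = x)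
        (fun b hb => by
          have hb' : b • x = x := hb
          show ((k⁻¹ * a)⁻¹ * b) • x = x
          rw [mul_smul, hb']
          exact hfixinv _ x hcx)
        (fun b hb => by
          have hb' : b • x = x := hb
          show ((k⁻¹ * a) * b) • x = x
          rw [mul_smul, hb', hcx])
    have stepB : ∀ x ∈ Of, (Finset.univ.filter fun b => b ∈ K ∧ b • x = x).card * Of.card
        = Kf.card := by
      intro x hxOf
      have hx : x ∈ O := by simpa [hOf] using hxOf
      have hfib : Kf.card = ∑ y ∈ Of, (Kf.filter fun b => b • x = y).card := by
        apply Finset.card_eq_sum_card_fiberwise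
        intro b hb
        have hbK : b ∈ K := by simpa [hKfdef] using hb
        simp only [hOf, Finset.mem_filter, Finset.mem_univ, true_and]
        simpa using hKsub O hO x hx b hbK
      have hper : ∀ y ∈ Of, (Kf.filter fun b => b • x = y).card
          = (Finset.univ.filter fun b => b ∈ K ∧ b • x = x).card := by
        intro y hyOf
        have hy : y ∈ O := by simpa [hOf] using hyOf
        obtain ⟨k, hkK, hky⟩ := hKO O hO x hx y hy
        rw [hKfdef, Finset.filter_filter]
        exact fiber_card_eq' K k hkK (fun b => b • x = y) (fun b => b • x = x)
          (fun b hb => by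
            have hb' : b • x = y := hb
            show (k⁻¹ * b) • x = x
            rw [mul_smul, hb', ← hky, inv_smul_smul])
          (fun b hb => by
            have hb' : b • x = x := hb
            show (k * b) • x = y
            rw [mul_smul, hb', hky])
      rw [hfib, Finset.sum_congr rfl hper, Finset.sum_const, smul_eq_mul, mul_comm]
    apply Nat.eq_of_mul_eq_mul_right hOfpos
    rw [Finset.sum_mul]
    calc ∑ x ∈ Of, (Finset.univ.filter fun b => a⁻¹ * b ∈ K ∧ b • x = x).card * Of.card
        = ∑ x ∈ Of, Kf.card := by
          refine Finset.sum_congr rfl (fun x hx => ?_)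
          rw [stepA x hx, stepB x hx]
      _ = Kf.card * Of.card := by rw [Finset.sum_const, smul_eq_mul, mul_comm]
  -- sum over Tf of fixed points in a common orbit
  have hTorbit : ∀ O ∈ OF,
      (∑ b ∈ Tf, (Finset.univ.filter fun x : X => x ∈ O ∧ b • x = x).card) = Kf.card := by
    intro O hOF
    have hO : O ∈ 𝒪 := (hOFmem O).mp hOF
    calc ∑ b ∈ Tf, (Finset.univ.filter fun x : X => x ∈ O ∧ b • x = x).card
        = ∑ b ∈ Tf, ∑ x ∈ Finset.univ.filter (fun x : X => x ∈ O),
            (if b • x = x then 1 else 0) := by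
          refine Finset.sum_congr rfl (fun b _ => ?_)
          rw [← Finset.filter_filter, Finset.card_filter]
      _ = ∑ x ∈ Finset.univ.filter (fun x : X => x ∈ O), ∑ b ∈ Tf,
            (if b • x = x then 1 else 0) := Finset.sum_comm
      _ = ∑ x ∈ Finset.univ.filter (fun x : X => x ∈ O),
            (Finset.univ.filter fun b => a⁻¹ * b ∈ K ∧ b • x = x).card := by
          refine Finset.sum_congr rfl (fun x _ => ?_)
          rw [← Finset.card_filter, hTfdef, Finset.filter_filter]
      _ = Kf.card := hOstep O hO
  -- disjointness
  have hfixlow : ∀ b : A,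
      (∑ O ∈ OF, (Finset.univ.filter fun x : X => x ∈ O ∧ b • x = x).card)
        ≤ (Finset.univ.filter fun x : X => b • x = x).card := by
    intro b
    rw [← Finset.card_biUnion]
    · apply Finset.card_le_card
      intro x hx
      simp only [Finset.mem_biUnion, Finset.mem_filter, Finset.mem_univ, true_and] at hx ⊢
      obtain ⟨O, -, -, h⟩ := hx
      exact h
    · intro O hO O' hO' hne
      rw [Function.onFun, Finset.disjoint_left]
      intro x hx hx'
      simp only [Finset.mem_filter, Finset.mem_univ, true_and] at hx hx'
      exact hne ((horbeq O ((hOFmem O).mp hO) x hx.1).trans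
        (horbeq O' ((hOFmem O').mp hO') x hx'.1).symm)
  have hTfixlower : OF.card * Kf.card
      ≤ ∑ b ∈ Tf, (Finset.univ.filter fun x : X => b • x = x).card := by
    calc OF.card * Kf.card = ∑ _O ∈ OF, Kf.card := by rw [Finset.sum_const, smul_eq_mul]
      _ = ∑ O ∈ OF, ∑ b ∈ Tf, (Finset.univ.filter fun x : X => x ∈ O ∧ b • x = x).card :=
          Finset.sum_congr rfl (fun O hO => (hTorbit O hO).symm)
      _ = ∑ b ∈ Tf, ∑ O ∈ OF, (Finset.univ.filter fun x : X => x ∈ O ∧ b • x = x).card :=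
          Finset.sum_comm
      _ ≤ ∑ b ∈ Tf, (Finset.univ.filter fun x : X => b • x = x).card :=
          Finset.sum_le_sum (fun b _ => hfixlow b)
  -- d ≥ 1
  have horbH0 : MulAction.orbit H x₀ = {x₀} := by
    apply Set.eq_singleton_iff_unique_mem.mpr
    refine ⟨MulAction.mem_orbit_self x₀, ?_⟩
    rintro y ⟨h, rfl⟩
    exact h.2
  have horbK0 : MulAction.orbit K x₀ = {x₀} := by
    apply Set.eq_singleton_iff_unique_mem.mpr
    refine ⟨MulAction.mem_orbit_self x₀, ?_⟩
    rintro y ⟨k, rfl⟩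
    exact ((hmemK k).mp k.2).2
  have hdpos : 1 ≤ OF.card := by
    refine Finset.card_pos.mpr ⟨MulAction.orbit H x₀, ?_⟩
    rw [hOFmem]
    refine ⟨⟨x₀, rfl⟩, ?_⟩
    intro x hx
    rw [horbH0] at hx ⊢
    rw [Set.mem_singleton_iff] at hx
    subst hx
    rw [horbK0]
  -- derangement / non-derangement split
  set Df : Finset A := Sf.filter (fun b => ∀ x : X, b • x ≠ x) with hDfdef
  set NDf : Finset A := Sf.filter (fun b => ¬ ∀ x : X, b • x ≠ x) with hNDfdef
  have hsplit : Df.card + NDf.card = Sf.card :=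
    Finset.card_filter_add_card_filter_not _
  have hTsubND : Tf ⊆ NDf := by
    intro b hb
    have hbK : a⁻¹ * b ∈ K := by
      simpa [hTfdef] using hb
    have hbG : a⁻¹ * b ∈ G := ((hmemK _).mp hbK).1
    have hbx : (a⁻¹ * b) • x₀ = x₀ := ((hmemK _).mp hbK).2
    have hbx₀ : b • x₀ = x₀ := by
      rw [mul_smul] at hbx
      calc b • x₀ = a • (a⁻¹ • (b • x₀)) := (smul_inv_smul a _).symm
        _ = a • x₀ := by rw [hbx]
        _ = x₀ := ha
    simp only [hNDfdef, hSfdef, Finset.mem_filter, Finset.mem_univ, true_and]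
    refine ⟨hbG, ?_⟩
    push_neg
    exact ⟨x₀, hbx₀⟩
  have hNDsub : NDf.card = Tf.card + (NDf \ Tf).card := by
    rw [add_comm, Finset.card_sdiff_add_card_eq_card hTsubND]
  have hNDlow : (NDf \ Tf).card
      ≤ ∑ b ∈ NDf \ Tf, (Finset.univ.filter fun x : X => b • x = x).card := by
    rw [Finset.card_eq_sum_ones]
    apply Finset.sum_le_sum
    intro b hb
    have hbND : b ∈ NDf := (Finset.mem_sdiff.mp hb).1
    have hb2 : ¬ ∀ x : X, b • x ≠ x := (Finset.mem_filter.mp hbND).2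
    push_neg at hb2
    obtain ⟨x, hx⟩ := hb2
    refine Nat.one_le_iff_ne_zero.mpr (Finset.card_ne_zero_of_mem (a := x) ?_)
    simp [hx]
  have hsumsdiff : (∑ b ∈ NDf \ Tf, (Finset.univ.filter fun x : X => b • x = x).card)
      + (∑ b ∈ Tf, (Finset.univ.filter fun x : X => b • x = x).card)
      = ∑ b ∈ NDf, (Finset.univ.filter fun x : X => b • x = x).card :=
    Finset.sum_sdiff hTsubND
  have hNDS : (∑ b ∈ NDf, (Finset.univ.filter fun x : X => b • x = x).card)
      ≤ ∑ b ∈ Sf, (Finset.univ.filter fun x : X => b • x = x).card :=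
    Finset.sum_le_sum_of_subset (Finset.filter_subset _ _)
  obtain ⟨e, he⟩ : ∃ e, OF.card = e + 1 := ⟨OF.card - 1, (Nat.succ_pred_eq_of_pos hdpos).symm⟩
  have hmain : e * Kf.card ≤ Df.card := by
    have h1 : (e + 1) * Kf.card = e * Kf.card + Kf.card := by ring
    have hSfcard : Sf.card = Fintype.card X * Kf.card := by rw [hSG, hGX]
    rw [he] at hTfixlower
    linarith [hsplit, hTK, hNDsub, hNDlow, hsumsdiff, hNDS, hSfix, hTfixlower, hSfcard, h1]
  -- translation to the stated goal
  have hKcard : Nat.card ↥K = Kf.card := by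
    rw [Nat.card_eq_fintype_card, hKfdef]
    exact Fintype.card_subtype _
  have hGcard : Nat.card ↥G = Gf.card := by
    rw [Nat.card_eq_fintype_card, hGfdef]
    exact Fintype.card_subtype _
  have hOcard : 𝒪.ncard = OF.card := Set.ncard_eq_toFinset_card 𝒪 (Set.toFinite 𝒪)
  have hDcard : Set.ncard {b : A | a⁻¹ * b ∈ G ∧ ∀ x : X, b • x ≠ x} = Df.card := by
    rw [hDfdef, hSfdef, Finset.filter_filter]
    rw [Set.ncard_eq_toFinset_card', Set.toFinset_setOf]
  constructor
  · rw [hKcard, hDcard, hOcard, he]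
    push_cast
    rw [add_sub_cancel_right]
    exact_mod_cast hmain
  · rw [hOcard, he, hDcard, hGcard]
    have hXpos : (0:ℝ) < Fintype.card X := by
      have hne : Nonempty X := ⟨x₀⟩
      exact_mod_cast Fintype.card_pos
    have hGpos : (0:ℝ) < (Gf.card : ℝ) := by
      have h1 : (1:A) ∈ Gf := by simp [hGfdef, one_mem]
      exact_mod_cast Finset.card_pos.mpr ⟨1, h1⟩
    rw [div_le_div_iff₀ hXpos hGpos]
    push_cast
    rw [add_sub_cancel_right]
    have h2 : (Gf.card : ℝ) = Fintype.card X * Kf.card := by exact_mod_cast hGX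
    rw [h2]
    have hmainR : (e : ℝ) * Kf.card ≤ Df.card := by exact_mod_cast hmain
    nlinarith [hXpos, hmainR]
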